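/- Let c1, c2 > 0 with c1 > 4 or c2 > 3. For every K > 0, if c1*K + c2*K - 4 < 0 (linear-cost stability of Model GR) then 64*c1^3*c2*K^4 - 96*c1^2*c2*K^2 - 81*c1^2 + 18*c1*c2 - c2^2 < 0 (quadratic-cost stability of Model GR), and there exists K > 0 for which the quadratic-cost condition holds but the linear-cost condition fails. -/
import Mathlib

set_option maxHeartbeats 1000000 in
private lemma GR_key (c1 c2 : ℝ) (hc1 : 0 < c1) (hc2 : 0 < c2)
    (h : 4 < c1 ∨ 3 < c2) :
    16384*c1^3*c2 - 1536*c1^2*c2*(c1+c2)^2 - (9*c1-c2)^2*(c1+c2)^4 < 0 := by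
  have hcase : (c2 ≤ 3 ∧ 4 ≤ c1) ∨ 3 ≤ c2 := by
    rcases h with h | h
    · rcases le_or_gt c2 3 with h' | h'
      · exact Or.inl ⟨h', h.le⟩
      · exact Or.inr h'.le
    · exact Or.inr h.le
  rcases hcase with ⟨h3, hc1'⟩ | h3
  · have ha : (0:ℝ) ≤ c1 - 4 := by linarith
    have hb : (0:ℝ) ≤ 3 - c2 := by linarith
    have hc : (0:ℝ) ≤ c2 := hc2.le
    linarith [mul_nonneg hb (pow_nonneg hc 4), mul_nonneg hb ha,
      mul_nonneg (mul_nonneg hb ha) (pow_nonneg hc 4), sq_nonneg (1-c2), hb,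
      mul_nonneg (pow_nonneg ha 0) (pow_nonneg hc 2),
      mul_nonneg (pow_nonneg ha 0) (pow_nonneg hc 3),
      mul_nonneg (pow_nonneg ha 0) (pow_nonneg hc 4),
      mul_nonneg (pow_nonneg ha 0) (pow_nonneg hc 6),
      mul_nonneg (pow_nonneg ha 1) (pow_nonneg hc 0),
      mul_nonneg (pow_nonneg ha 1) (pow_nonneg hc 2),
      mul_nonneg (pow_nonneg ha 1) (pow_nonneg hc 3),
      mul_nonneg (pow_nonneg ha 1) (pow_nonneg hc 4),
      mul_nonneg (pow_nonneg ha 2) (pow_nonneg hc 0),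
      mul_nonneg (pow_nonneg ha 2) (pow_nonneg hc 1),
      mul_nonneg (pow_nonneg ha 2) (pow_nonneg hc 2),
      mul_nonneg (pow_nonneg ha 2) (pow_nonneg hc 3),
      mul_nonneg (pow_nonneg ha 2) (pow_nonneg hc 4),
      mul_nonneg (pow_nonneg ha 3) (pow_nonneg hc 0),
      mul_nonneg (pow_nonneg ha 3) (pow_nonneg hc 1),
      mul_nonneg (pow_nonneg ha 3) (pow_nonneg hc 2),
      mul_nonneg (pow_nonneg ha 3) (pow_nonneg hc 3),
      mul_nonneg (pow_nonneg ha 4) (pow_nonneg hc 0),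
      mul_nonneg (pow_nonneg ha 4) (pow_nonneg hc 1),
      mul_nonneg (pow_nonneg ha 4) (pow_nonneg hc 2),
      mul_nonneg (pow_nonneg ha 5) (pow_nonneg hc 0),
      mul_nonneg (pow_nonneg ha 5) (pow_nonneg hc 1),
      mul_nonneg (pow_nonneg ha 6) (pow_nonneg hc 0)]
  · have key : 32*c1 < 3*(c1+c2)^2 := by nlinarith [sq_nonneg (c1-3), hc1]
    have h1 : 0 < c1^2*c2*(3*(c1+c2)^2 - 32*c1) :=
      mul_pos (mul_pos (pow_pos hc1 2) hc2) (by linarith)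
    nlinarith [mul_nonneg (sq_nonneg (9*c1-c2))
      (pow_nonneg (by positivity : (0:ℝ) ≤ c1+c2) 4)]

theorem GR_strict_containment (c1 c2 : ℝ) (hc1 : 0 < c1) (hc2 : 0 < c2)
    (h : 4 < c1 ∨ 3 < c2) :
    (∀ K : ℝ, 0 < K → c1 * K + c2 * K - 4 < 0 →
      64 * c1 ^ 3 * c2 * K ^ 4 - 96 * c1 ^ 2 * c2 * K ^ 2
        - 81 * c1 ^ 2 + 18 * c1 * c2 - c2 ^ 2 < 0) ∧
    (∃ K : ℝ, 0 < K ∧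
      64 * c1 ^ 3 * c2 * K ^ 4 - 96 * c1 ^ 2 * c2 * K ^ 2
        - 81 * c1 ^ 2 + 18 * c1 * c2 - c2 ^ 2 < 0 ∧
      ¬ (c1 * K + c2 * K - 4 < 0)) := by
  have hs : (0:ℝ) < c1 + c2 := by linarith
  have hg := GR_key c1 c2 hc1 hc2 h
  constructor
  · intro K hK hlin
    have hu : K^2*(c1+c2)^2 < 16 := by nlinarith [mul_pos hK hs]
    have hupos : 0 < K^2*(c1+c2)^2 := by positivity
    have f1 : (K^2*(c1+c2)^2) *
        (16384*c1^3*c2 - 1536*c1^2*c2*(c1+c2)^2 - (9*c1-c2)^2*(c1+c2)^4) < 0 :=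
      mul_neg_of_pos_of_neg hupos hg
    have f2 : 0 ≤ 1024*c1^3*c2*(K^2*(c1+c2)^2)*(16 - K^2*(c1+c2)^2) := by
      have : (0:ℝ) ≤ 16 - K^2*(c1+c2)^2 := by linarith
      positivity
    have f3 : 0 ≤ (9*c1-c2)^2*(c1+c2)^4*(16 - K^2*(c1+c2)^2) := by
      have : (0:ℝ) ≤ 16 - K^2*(c1+c2)^2 := by linarith
      positivity
    nlinarith [pow_pos hs 4, f1, f2, f3]
  · refine ⟨4/(c1+c2), by positivity, ?_, ?_⟩
    · have e : 64 * c1 ^ 3 * c2 * (4/(c1+c2)) ^ 4 - 96 * c1 ^ 2 * c2 * (4/(c1+c2)) ^ 2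
          - 81 * c1 ^ 2 + 18 * c1 * c2 - c2 ^ 2
          = (16384*c1^3*c2 - 1536*c1^2*c2*(c1+c2)^2 - (9*c1-c2)^2*(c1+c2)^4)
            / (c1+c2)^4 := by
        field_simp
        ring
      rw [e]
      exact div_neg_of_neg_of_pos hg (by positivity)
    · have : c1 * (4/(c1+c2)) + c2 * (4/(c1+c2)) - 4 = 0 := by
        field_simp
        ring
      rw [this]
      norm_num
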